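/- Let ρ and σ be faithful states of M and t ∈ ℝ. Then ‖ρ − R_σ^{−t}(ρ_N)‖₁ ≤ 2 ‖ρ^{1/2} − σ^{1/2+it} σ_N^{−1/2−it} ρ_N^{1/2+it} ρ^{−it}‖₂. -/

import Mathlib

open scoped ComplexOrder
open MeasureTheory Matrix

namespace QFDiv

/-- `Mat n` is the matrix algebra `Mₙ(ℂ)`. -/
abbrev Mat (n : ℕ) := Matrix (Fin n) (Fin n) ℂ

/-- Hilbert–Schmidt inner product `⟨x, y⟩ = tr(x* y)`. -/
noncomputable def hsInner {n : ℕ} (x y : Mat n) : ℂ := (xᴴ * y).trace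

/-- Hilbert–Schmidt norm `‖x‖₂ = tr(x* x)^{1/2}`. -/
noncomputable def hsNorm {n : ℕ} (x : Mat n) : ℝ := Real.sqrt ((xᴴ * x).trace.re)

/-- Trace norm `‖x‖₁ = tr((x* x)^{1/2})`. -/
noncomputable def traceNorm {n : ℕ} (x : Mat n) : ℝ :=
  (((Matrix.posSemidef_conjTranspose_mul_self x).1.eigenvectorUnitary : Mat n) *
    Matrix.diagonal (fun i =>
      ((Real.sqrt ((Matrix.posSemidef_conjTranspose_mul_self x).1.eigenvalues i) : ℝ) : ℂ)) *
    (star (Matrix.posSemidef_conjTranspose_mul_self x).1.eigenvectorUnitary : Mat n)).trace.re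

/-- Operator norm `‖x‖_∞` (as an operator on the Euclidean space `ℂⁿ`). -/
noncomputable def opNorm {n : ℕ} (x : Mat n) : ℝ :=
  ‖Matrix.toEuclideanCLM (𝕜 := ℂ) x‖

/-- Complex matrix power `A^z := exp(z · log A)` for Hermitian (in particular positive
definite) `A`, defined by the spectral functional calculus; junk value `0` otherwise. -/
noncomputable def mpow {n : ℕ} (A : Mat n) (z : ℂ) : Mat n :=
  if h : A.IsHermitian then
    (h.eigenvectorUnitary : Mat n) *
      Matrix.diagonal (fun i => (h.eigenvalues i : ℂ) ^ z) *
      star (h.eigenvectorUnitary : Mat n)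
  else 0

/-- Matrix logarithm via the spectral functional calculus. -/
noncomputable def mlog {n : ℕ} (A : Mat n) : Mat n :=
  if h : A.IsHermitian then
    (h.eigenvectorUnitary : Mat n) *
      Matrix.diagonal (fun i => (Real.log (h.eigenvalues i) : ℂ)) *
      star (h.eigenvectorUnitary : Mat n)
  else 0

/-- `f(Δ(σ,ω))(x)`, where `Δ(σ,ω) : y ↦ σ y ω⁻¹` is the relative modular operator on the
Hilbert–Schmidt space and `f(Δ(σ,ω))` is its functional calculus:  writing `σ = U diag(s) U*`
and `ω = V diag(w) V*`, the operator `Δ(σ,ω)` has orthonormal eigenvectors `U Eᵢⱼ V*` with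
eigenvalues `sᵢ/wⱼ`, so `f(Δ(σ,ω))(x) = U (f(sᵢ/wⱼ) ⊙ (U* x V)) V*`. -/
noncomputable def modApply {n : ℕ} (f : ℝ → ℝ) (σ ω : Mat n) (x : Mat n) : Mat n :=
  if hσ : σ.IsHermitian then
    if hω : ω.IsHermitian then
      (hσ.eigenvectorUnitary : Mat n) *
        Matrix.of (fun i j =>
          (f (hσ.eigenvalues i / hω.eigenvalues j) : ℂ) *
            ((star (hσ.eigenvectorUnitary : Mat n) * x * (hω.eigenvectorUnitary : Mat n)) i j)) *
        star (hω.eigenvectorUnitary : Mat n)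
    else 0
  else 0

/-- Standard `f`-divergence `Q_f(ρ‖σ) = ⟨ρ^{1/2}, f(Δ(σ,ρ))(ρ^{1/2})⟩`. -/
noncomputable def Qf {n : ℕ} (f : ℝ → ℝ) (ρ σ : Mat n) : ℝ :=
  (hsInner (mpow ρ (1/2)) (modApply f σ ρ (mpow ρ (1/2)))).re

/-- Optimized `f`-divergence `Q̃_f(ρ‖σ) = sup_ω ⟨ρ^{1/2}, f(Δ(σ,ω))(ρ^{1/2})⟩`, where the
supremum runs over all faithful states `ω` of `Mₙ(ℂ)`. -/
noncomputable def Qopt {n : ℕ} (f : ℝ → ℝ) (ρ σ : Mat n) : ℝ :=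
  ⨆ ω : {ω : Mat n // ω.PosDef ∧ ω.trace = 1},
    (hsInner (mpow ρ (1/2)) (modApply f σ ω.1 (mpow ρ (1/2)))).re

/-- Optimized `f`-divergence on the subalgebra `N`: the supremum runs over the faithful
states `ω` of `N`. -/
noncomputable def QoptN {n : ℕ} (f : ℝ → ℝ) (N : StarSubalgebra ℂ (Mat n)) (ρ σ : Mat n) : ℝ :=
  ⨆ ω : {ω : Mat n // ω ∈ N ∧ ω.PosDef ∧ ω.trace = 1},
    (hsInner (mpow ρ (1/2)) (modApply f σ ω.1 (mpow ρ (1/2)))).re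

/-- Umegaki relative entropy `D(ρ‖σ) = tr(ρ (log ρ − log σ))`. -/
noncomputable def relEnt {n : ℕ} (ρ σ : Mat n) : ℝ := ((ρ * (mlog ρ - mlog σ)).trace).re

/-- `Q_{x²}(ρ‖σ) = tr(ρ⁻¹ σ²)`. -/
noncomputable def Qsq {n : ℕ} (ρ σ : Mat n) : ℝ := ((ρ⁻¹ * (σ * σ)).trace).re

/-- `Q_{x⁻¹}(ρ‖σ) = tr(ρ² σ⁻¹)`. -/
noncomputable def Qxinv {n : ℕ} (ρ σ : Mat n) : ℝ := ((ρ * ρ * σ⁻¹).trace).re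

/-- Petz–Rényi relative quasi-entropy `Q_s(ρ‖σ) = tr(ρ^{1−s} σ^s)`. -/
noncomputable def Qs {n : ℕ} (s : ℝ) (ρ σ : Mat n) : ℝ :=
  ((mpow ρ (1 - (s : ℂ)) * mpow σ (s : ℂ)).trace).re

/-- Petz–Rényi relative entropy `D_α(ρ‖σ) = (α−1)⁻¹ log tr(ρ^α σ^{1−α})`. -/
noncomputable def petzRenyi {n : ℕ} (α : ℝ) (ρ σ : Mat n) : ℝ :=
  (α - 1)⁻¹ * Real.log (((mpow ρ (α : ℂ) * mpow σ (1 - (α : ℂ))).trace).re)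

/-- Sandwiched Rényi relative quasi-entropy
`Q̃_α(ρ‖σ) = (tr[(ρ^{1/2} σ^{−1/α'} ρ^{1/2})^α])^{1/α}` with `α' = α/(α−1)`,
so that `−1/α' = (1−α)/α`. -/
noncomputable def sandQ {n : ℕ} (α : ℝ) (ρ σ : Mat n) : ℝ :=
  (((mpow (mpow ρ (1/2) * mpow σ (((1 - α)/α : ℝ) : ℂ) * mpow ρ (1/2)) (α : ℂ)).trace).re)
    ^ (1/α)

/-- Sandwiched Rényi relative entropy `D̃_α(ρ‖σ) = α' log Q̃_α(ρ‖σ)`. -/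
noncomputable def sandD {n : ℕ} (α : ℝ) (ρ σ : Mat n) : ℝ :=
  (α/(α-1)) * Real.log (sandQ α ρ σ)

/-- Rotated Petz recovery map
`R_ρ^t(x) = ρ^{1/2−it} ρ_N^{−1/2+it} x ρ_N^{−1/2−it} ρ^{1/2+it}` (here `ρN` is the matrix
`ρ_N = E(ρ)`). -/
noncomputable def rotPetz {n : ℕ} (ρ ρN : Mat n) (t : ℝ) (x : Mat n) : Mat n :=
  mpow ρ (1/2 - Complex.I * t) * mpow ρN (-(1/2) + Complex.I * t) * x *
    mpow ρN (-(1/2) - Complex.I * t) * mpow ρ (1/2 + Complex.I * t)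

/-- The probability measure `dβ(t) = (π/2)(cosh(πt)+1)⁻¹ dt` on `ℝ`. -/
noncomputable def betaMeasure : Measure ℝ :=
  volume.withDensity fun t => ENNReal.ofReal (Real.pi / 2 * (Real.cosh (Real.pi * t) + 1)⁻¹)

/-- Universal Petz recovery map `R_ρ^u(x) = ∫_ℝ R_ρ^{t/2}(x) dβ(t)` (Bochner integral,
computed entrywise). -/
noncomputable def univPetz {n : ℕ} (ρ ρN : Mat n) (x : Mat n) : Mat n :=
  Matrix.of fun i j => ∫ t : ℝ, rotPetz ρ ρN (t/2) x i j ∂betaMeasure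

/-- `E` is the trace-preserving conditional expectation onto the subalgebra `N`, i.e. the
orthogonal projection of `Mₙ(ℂ)` onto `N` for the Hilbert–Schmidt inner product. -/
def IsCondExp {n : ℕ} (N : StarSubalgebra ℂ (Mat n)) (E : Mat n →ₗ[ℂ] Mat n) : Prop :=
  (∀ x, E x ∈ N) ∧ (∀ x ∈ N, E x = x) ∧ (∀ x y, hsInner (E x) y = hsInner x (E y))

/-- `f` admits the integral representation
`f(x) = a + b x + ∫₀^∞ (1/(λ+x) − λ/(λ²+1)) dν(λ)` for `x > 0`, with `b ≥ 0` and
`∫ λ/(λ²+1) dν(λ) < ∞`. -/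
def HasIntRep (f : ℝ → ℝ) (a b : ℝ) (ν : Measure ℝ) : Prop :=
  0 ≤ b ∧
  (∫⁻ l in Set.Ioi (0:ℝ), ENNReal.ofReal (l / (l^2 + 1)) ∂ν) < ⊤ ∧
  ∀ x : ℝ, 0 < x →
    IntegrableOn (fun l => 1/(l + x) - l/(l^2 + 1)) (Set.Ioi 0) ν ∧
    f x = a + b*x + ∫ l in Set.Ioi (0:ℝ), (1/(l + x) - l/(l^2 + 1)) ∂ν


section Aux

variable {n : ℕ}

/-- The spectral functional calculus of a Hermitian matrix. -/
noncomputable def specFun {A : Mat n} (hA : A.IsHermitian) (g : ℝ → ℂ) : Mat n :=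
  (hA.eigenvectorUnitary : Mat n) *
    Matrix.diagonal (fun i => g (hA.eigenvalues i)) *
    star (hA.eigenvectorUnitary : Mat n)

variable {A : Mat n} (hA : A.IsHermitian)

lemma specFun_mul (g g' : ℝ → ℂ) :
    specFun hA g * specFun hA g' = specFun hA (g * g') := by
  have h1 : (star (hA.eigenvectorUnitary : Mat n)) * (hA.eigenvectorUnitary : Mat n) = 1 :=
    Matrix.mem_unitaryGroup_iff'.mp hA.eigenvectorUnitary.2
  simp only [specFun, Matrix.mul_assoc]
  rw [← Matrix.mul_assoc (star (hA.eigenvectorUnitary : Mat n)), h1, Matrix.one_mul,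
    ← Matrix.mul_assoc (Matrix.diagonal _), Matrix.diagonal_mul_diagonal]
  rfl

lemma specFun_conjTranspose (g : ℝ → ℂ) :
    (specFun hA g)ᴴ = specFun hA (fun r => star (g r)) := by
  simp only [specFun, Matrix.conjTranspose_mul, Matrix.diagonal_conjTranspose,
    Matrix.star_eq_conjTranspose (hA.eigenvectorUnitary : Mat n),
    Matrix.conjTranspose_conjTranspose, Matrix.mul_assoc]
  rfl

lemma specFun_trace (g : ℝ → ℂ) :
    (specFun hA g).trace = ∑ i, g (hA.eigenvalues i) := by
  have h1 : (star (hA.eigenvectorUnitary : Mat n)) * (hA.eigenvectorUnitary : Mat n) = 1 :=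
    Matrix.mem_unitaryGroup_iff'.mp hA.eigenvectorUnitary.2
  rw [specFun, Matrix.trace_mul_cycle, h1, Matrix.one_mul, Matrix.trace_diagonal]

lemma specFun_one : specFun hA (fun _ => 1) = 1 := by
  have h2 : (hA.eigenvectorUnitary : Mat n) * (star (hA.eigenvectorUnitary : Mat n)) = 1 :=
    Matrix.mem_unitaryGroup_iff.mp hA.eigenvectorUnitary.2
  rw [specFun, Matrix.diagonal_one, Matrix.mul_one, h2]

lemma specFun_id : specFun hA (fun r => (r : ℂ)) = A := by
  conv_rhs => rw [hA.spectral_theorem]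
  rfl

lemma specFun_congr {g g' : ℝ → ℂ} (h : ∀ i, g (hA.eigenvalues i) = g' (hA.eigenvalues i)) :
    specFun hA g = specFun hA g' := by
  unfold specFun
  congr 2
  exact Matrix.diagonal_eq_diagonal_iff.mpr fun i => h i

lemma specFun_add (g g' : ℝ → ℂ) :
    specFun hA (g + g') = specFun hA g + specFun hA g' := by
  have h : (fun i => (g + g') (hA.eigenvalues i)) =
      fun i => g (hA.eigenvalues i) + g' (hA.eigenvalues i) := rfl
  rw [specFun, h, ← Matrix.diagonal_add, Matrix.mul_add, Matrix.add_mul]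
  rfl

lemma specFun_smul (c : ℂ) (g : ℝ → ℂ) :
    specFun hA (c • g) = c • specFun hA g := by
  have h : (fun i => (c • g) (hA.eigenvalues i)) =
      c • fun i => g (hA.eigenvalues i) := rfl
  rw [specFun, h, Matrix.diagonal_smul, Matrix.mul_smul, Matrix.smul_mul]
  rfl

lemma specFun_sub (g g' : ℝ → ℂ) :
    specFun hA (g - g') = specFun hA g - specFun hA g' := by
  have h : (fun i => (g - g') (hA.eigenvalues i)) =
      fun i => g (hA.eigenvalues i) - g' (hA.eigenvalues i) := rfl
  rw [specFun, h, ← Matrix.diagonal_sub, Matrix.mul_sub, Matrix.sub_mul]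
  rfl

lemma specFun_sum {ι : Type*} (s : Finset ι) (g : ι → ℝ → ℂ) :
    specFun hA (∑ i ∈ s, g i) = ∑ i ∈ s, specFun hA (g i) := by
  classical
  induction s using Finset.induction with
  | empty => simp only [Finset.sum_empty]; simp [specFun]
  | insert _ _ hx ih =>
    rw [Finset.sum_insert hx, Finset.sum_insert hx, specFun_add, ih]

lemma specFun_posSemidef {f : ℝ → ℝ} (h : ∀ i, 0 ≤ f (hA.eigenvalues i)) :
    (specFun hA (fun r => (f r : ℂ))).PosSemidef := by
  rw [specFun, Matrix.star_eq_conjTranspose]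
  refine Matrix.PosSemidef.mul_mul_conjTranspose_same ?_ _
  refine Matrix.posSemidef_diagonal_iff.mpr fun i => ?_
  rw [Complex.zero_le_real]
  exact h i

lemma mpow_eq_specFun (z : ℂ) : mpow A z = specFun hA (fun r => (r : ℂ) ^ z) := by
  rw [mpow, dif_pos hA]
  rfl

lemma specFun_list_prod {α : Type*} (l : List α) (g : α → ℝ → ℂ) :
    (l.map (fun c => specFun hA (g c))).prod =
      specFun hA (fun r => (l.map (fun c => g c r)).prod) := by
  induction l with
  | nil =>
    simp only [List.map_nil, List.prod_nil]
    exact (specFun_one hA).symm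
  | cons a l ih =>
    simp only [List.map_cons, List.prod_cons, ih, specFun_mul]
    rfl

lemma specFun_mem {N : StarSubalgebra ℂ (Mat n)} (hAN : A ∈ N) (g : ℝ → ℂ) :
    specFun hA g ∈ N := by
  classical
  set T : Finset ℝ := Finset.image hA.eigenvalues Finset.univ with hT
  have hfactor : ∀ c : ℝ, (A - ((c : ℝ) : ℂ) • (1 : Mat n)) =
      specFun hA (fun r => (r : ℂ) - (c : ℂ)) := by
    intro c
    have e2 : (fun r : ℝ => (r : ℂ) - (c : ℂ)) =
        (fun r : ℝ => (r : ℂ)) - (fun _ : ℝ => ((c : ℂ))) := rfl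
    have e3 : (fun _ : ℝ => ((c : ℂ))) = (c : ℂ) • (fun _ : ℝ => (1 : ℂ)) := by
      funext r; simp
    rw [e2, specFun_sub, specFun_id, e3, specFun_smul, specFun_one]
  have hproj : ∀ μ ∈ T, specFun hA (fun r => if r = μ then 1 else 0) ∈ N := by
    intro μ hμ
    have hmain : specFun hA (fun r => if r = μ then (1 : ℂ) else 0) =
        ((T.erase μ).toList.map
          (fun c => ((((μ - c)⁻¹ : ℝ) : ℂ)) • (A - ((c : ℝ) : ℂ) • (1 : Mat n)))).prod := by
      have hmap : (T.erase μ).toList.map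
            (fun c => ((((μ - c)⁻¹ : ℝ) : ℂ)) • (A - ((c : ℝ) : ℂ) • (1 : Mat n))) =
          (T.erase μ).toList.map
            (fun c => specFun hA (fun r => (((μ - c)⁻¹ : ℝ) : ℂ) * ((r : ℂ) - (c : ℂ)))) := by
        refine List.map_congr_left (fun c _ => ?_)
        rw [hfactor c, ← specFun_smul]
        rfl
      rw [hmap, specFun_list_prod]
      refine (specFun_congr hA fun i => ?_).symm
      rw [Finset.prod_map_toList]
      by_cases hx : hA.eigenvalues i = μ
      · rw [if_pos hx, hx]
        refine Finset.prod_eq_one (fun c hc => ?_)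
        have hcne : c ≠ μ := Finset.ne_of_mem_erase hc
        have hne : ((μ - c : ℝ) : ℂ) ≠ 0 := by
          exact_mod_cast sub_ne_zero.mpr (Ne.symm hcne)
        have : ((μ : ℂ) - (c : ℂ)) = ((μ - c : ℝ) : ℂ) := by push_cast; ring
        rw [this, ← Complex.ofReal_mul,
          inv_mul_cancel₀ (sub_ne_zero.mpr (Ne.symm hcne)), Complex.ofReal_one]
      · rw [if_neg hx]
        have hmem : hA.eigenvalues i ∈ T.erase μ := by
          refine Finset.mem_erase.mpr ⟨hx, ?_⟩
          exact Finset.mem_image_of_mem hA.eigenvalues (Finset.mem_univ i)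
        refine Finset.prod_eq_zero hmem ?_
        simp
    rw [hmain]
    refine list_prod_mem (fun x hx => ?_)
    obtain ⟨c, _, rfl⟩ := List.mem_map.mp hx
    exact SMulMemClass.smul_mem _ (sub_mem hAN (SMulMemClass.smul_mem _ (one_mem N)))
  have hdecomp : specFun hA g =
      ∑ μ ∈ T, g μ • specFun hA (fun r => if r = μ then 1 else 0) := by
    have e1 : specFun hA g =
        specFun hA (∑ μ ∈ T, g μ • fun r => if r = μ then (1 : ℂ) else 0) := by
      refine specFun_congr hA fun i => ?_
      have hmem : hA.eigenvalues i ∈ T :=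
        Finset.mem_image_of_mem hA.eigenvalues (Finset.mem_univ i)
      rw [Finset.sum_apply]
      simp only [Pi.smul_apply, smul_eq_mul, mul_ite, mul_one, mul_zero]
      rw [Finset.sum_ite_eq T (hA.eigenvalues i) g, if_pos hmem]
    rw [e1, specFun_sum]
    exact Finset.sum_congr rfl fun μ _ => specFun_smul hA _ _
  rw [hdecomp]
  exact sum_mem fun μ hμ => SMulMemClass.smul_mem _ (hproj μ hμ)

lemma hsInner_re_le (x y : Mat n) : (hsInner x y).re ≤ hsNorm x * hsNorm y := by
  classical
  let v : Mat n → EuclideanSpace ℂ (Fin n × Fin n) := fun x => WithLp.toLp 2 (fun p : Fin n × Fin n => x p.2 p.1)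
  have hv : ∀ x y : Mat n, hsInner x y = @inner ℂ _ _ (v x) (v y) := by
    intro x y
    simp only [hsInner, Matrix.trace, Matrix.diag_apply, Matrix.mul_apply,
      Matrix.conjTranspose_apply, PiLp.inner_apply, PiLp.toLp_apply, RCLike.inner_apply, v,
      Fintype.sum_prod_type]
    exact Finset.sum_congr rfl fun i _ => Finset.sum_congr rfl fun j _ => mul_comm _ _
  have hn : ∀ x : Mat n, hsNorm x = ‖v x‖ := by
    intro x
    rw [hsNorm, show ((xᴴ * x).trace) = hsInner x x from rfl, hv,
      show ((@inner ℂ _ _ (v x) (v x)).re) = RCLike.re (@inner ℂ _ _ (v x) (v x)) from rfl,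
      inner_self_eq_norm_sq (𝕜 := ℂ), Real.sqrt_sq (norm_nonneg _)]
  calc (hsInner x y).re ≤ ‖hsInner x y‖ := Complex.re_le_norm _
    _ = ‖@inner ℂ _ _ (v x) (v y)‖ := by rw [hv]
    _ ≤ ‖v x‖ * ‖v y‖ := norm_inner_le_norm _ _
    _ = hsNorm x * hsNorm y := by rw [hn, hn]

lemma hsNorm_unitary_mul {S : Mat n} (hS : Sᴴ * S = 1) (x : Mat n) :
    hsNorm (S * x) = hsNorm x := by
  unfold hsNorm
  rw [Matrix.conjTranspose_mul, Matrix.mul_assoc, ← Matrix.mul_assoc Sᴴ S x, hS,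
    Matrix.one_mul]

lemma eq_zero_of_trace_mul_conjTranspose {x : Mat n} (h : (x * xᴴ).trace = 0) : x = 0 := by
  classical
  have h2 : ∑ i, ∑ j, Complex.normSq (x i j) = 0 := by
    have := congrArg Complex.re h
    simp only [Matrix.trace, Matrix.diag_apply, Matrix.mul_apply,
      Matrix.conjTranspose_apply, Complex.zero_re] at this
    rw [← this, Complex.re_sum]
    refine Finset.sum_congr rfl fun i _ => ?_
    rw [Complex.re_sum]
    refine Finset.sum_congr rfl fun j _ => ?_
    rw [Complex.star_def, Complex.mul_conj, Complex.ofReal_re]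
  ext i j
  have hnn : ∀ i ∈ (Finset.univ : Finset (Fin n)),
      0 ≤ ∑ j, Complex.normSq (x i j) :=
    fun i _ => Finset.sum_nonneg fun j _ => Complex.normSq_nonneg _
  have h3 := (Finset.sum_eq_zero_iff_of_nonneg hnn).mp h2 i (Finset.mem_univ i)
  have h4 := (Finset.sum_eq_zero_iff_of_nonneg
    (fun j _ => Complex.normSq_nonneg (x i j))).mp h3 j (Finset.mem_univ j)
  simpa using Complex.normSq_eq_zero.mp h4

lemma posDef_of_eigenvalues_pos {A : Mat n} (hA : A.IsHermitian)
    (h : ∀ i, 0 < hA.eigenvalues i) : A.PosDef := by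
  exact hA.posDef_iff_eigenvalues_pos.mpr h

lemma trace_conj_pos {x : Mat n} (hx : x.PosDef) {W : Mat n} (hW : W ≠ 0) :
    0 < ((Wᴴ * x * W).trace).re := by
  classical
  have hentry : ∀ j, (Wᴴ * x * W) j j =
      dotProduct (star fun a => W a j) (x *ᵥ fun a => W a j) := by
    intro j
    simp only [Matrix.mul_apply, Matrix.conjTranspose_apply, dotProduct,
      Matrix.mulVec, Pi.star_apply, Finset.sum_mul, Finset.mul_sum]
    rw [Finset.sum_comm]
    refine Finset.sum_congr rfl fun a _ => Finset.sum_congr rfl fun b _ => by ring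
  have hcol : ∃ j, (fun a => W a j) ≠ 0 := by
    by_contra hc
    push_neg at hc
    apply hW
    ext a j
    have := congrFun (hc j) a
    simpa using this
  obtain ⟨j0, hj0⟩ := hcol
  rw [Matrix.trace, Complex.re_sum]
  refine Finset.sum_pos' (fun j _ => ?_) ⟨j0, Finset.mem_univ j0, ?_⟩
  · rw [Matrix.diag_apply, hentry j]
    exact hx.posSemidef.re_dotProduct_nonneg _
  · rw [Matrix.diag_apply, hentry j0]
    exact hx.re_dotProduct_pos hj0

lemma star_cpow_pos {r : ℝ} (hr : 0 < r) (z : ℂ) :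
    star ((r : ℂ) ^ z) = (r : ℂ) ^ (star z) := by
  have hne : (r : ℂ) ≠ 0 := Complex.ofReal_ne_zero.mpr hr.ne'
  have hc : (starRingEnd ℂ) (Complex.log r * z) = Complex.log r * star z := by
    rw [RingHom.map_mul, ← Complex.ofReal_log hr.le, Complex.conj_ofReal]
    rfl
  rw [Complex.cpow_def_of_ne_zero hne, Complex.cpow_def_of_ne_zero hne,
    show (star (Complex.exp (Complex.log r * z)) : ℂ) =
      (starRingEnd ℂ) (Complex.exp (Complex.log r * z)) from rfl, ← Complex.exp_conj, hc]

lemma mpow_add {A : Mat n} (hA : A.PosDef) (z w : ℂ) :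
    mpow A z * mpow A w = mpow A (z + w) := by
  rw [mpow_eq_specFun hA.isHermitian, mpow_eq_specFun hA.isHermitian,
    mpow_eq_specFun hA.isHermitian, specFun_mul]
  refine specFun_congr _ fun i => ?_
  have hne : ((hA.isHermitian.eigenvalues i : ℝ) : ℂ) ≠ 0 :=
    Complex.ofReal_ne_zero.mpr (hA.eigenvalues_pos i).ne'
  exact (Complex.cpow_add _ _ hne).symm

lemma mpow_zero {A : Mat n} (hA : A.IsHermitian) : mpow A 0 = 1 := by
  rw [mpow_eq_specFun hA]
  rw [show (fun r : ℝ => (r : ℂ) ^ (0 : ℂ)) = fun _ : ℝ => (1 : ℂ) by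
    funext r; exact Complex.cpow_zero _]
  exact specFun_one hA

lemma mpow_one {A : Mat n} (hA : A.IsHermitian) : mpow A 1 = A := by
  rw [mpow_eq_specFun hA]
  rw [show (fun r : ℝ => (r : ℂ) ^ (1 : ℂ)) = fun r : ℝ => (r : ℂ) by
    funext r; exact Complex.cpow_one _]
  exact specFun_id hA

lemma mpow_conjTranspose {A : Mat n} (hA : A.PosDef) (z : ℂ) :
    (mpow A z)ᴴ = mpow A (star z) := by
  rw [mpow_eq_specFun hA.isHermitian, mpow_eq_specFun hA.isHermitian, specFun_conjTranspose]
  exact specFun_congr _ fun i => star_cpow_pos (hA.eigenvalues_pos i) z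

lemma mpow_mem {N : StarSubalgebra ℂ (Mat n)} {A : Mat n} (hA : A.IsHermitian)
    (hAN : A ∈ N) (z : ℂ) : mpow A z ∈ N := by
  rw [mpow_eq_specFun hA]
  exact specFun_mem hA hAN _

end Aux

section CondExpAux

variable {n : ℕ} {N : StarSubalgebra ℂ (Mat n)} {E : Mat n →ₗ[ℂ] Mat n}

lemma condExp_trace (hE : IsCondExp N E) (x : Mat n) {y : Mat n} (hy : y ∈ N) :
    (E x * y).trace = (x * y).trace := by
  have hyH : yᴴ ∈ N := by
    rw [← Matrix.star_eq_conjTranspose]; exact star_mem hy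
  have h1 : E yᴴ = yᴴ := hE.2.1 yᴴ hyH
  calc (E x * y).trace = (y * E x).trace := Matrix.trace_mul_comm _ _
    _ = hsInner yᴴ (E x) := by rw [hsInner, Matrix.conjTranspose_conjTranspose]
    _ = hsInner (E yᴴ) x := (hE.2.2 yᴴ x).symm
    _ = hsInner yᴴ x := by rw [h1]
    _ = (y * x).trace := by rw [hsInner, Matrix.conjTranspose_conjTranspose]
    _ = (x * y).trace := Matrix.trace_mul_comm _ _

lemma condExp_isHermitian (hE : IsCondExp N E) {x : Mat n} (hx : x.IsHermitian) :
    (E x).IsHermitian := by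
  have hNx : E x ∈ N := hE.1 x
  have hNxH : (E x)ᴴ ∈ N := by
    rw [← Matrix.star_eq_conjTranspose]; exact star_mem hNx
  have hzN : E x - (E x)ᴴ ∈ N := sub_mem hNx hNxH
  have key : ∀ y ∈ N, ((E x - (E x)ᴴ) * y).trace = 0 := by
    intro y hy
    have hyH : yᴴ ∈ N := by
      rw [← Matrix.star_eq_conjTranspose]; exact star_mem hy
    have h3 : ((E x)ᴴ * y).trace = (x * y).trace := by
      have e1 : ((E x)ᴴ * y).trace = star ((yᴴ * E x).trace) := by
        rw [← Matrix.trace_conjTranspose, Matrix.conjTranspose_mul,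
          Matrix.conjTranspose_conjTranspose]
      rw [e1, Matrix.trace_mul_comm, condExp_trace hE x hyH,
        ← Matrix.trace_conjTranspose, Matrix.conjTranspose_mul,
        Matrix.conjTranspose_conjTranspose, hx.eq, Matrix.trace_mul_comm]
    rw [Matrix.sub_mul, Matrix.trace_sub, condExp_trace hE x hy, h3, sub_self]
  have h0 := key ((E x - (E x)ᴴ)ᴴ) (by
    rw [← Matrix.star_eq_conjTranspose]; exact star_mem hzN)
  have hz : E x - (E x)ᴴ = 0 := eq_zero_of_trace_mul_conjTranspose h0
  have := sub_eq_zero.mp hz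
  exact this.symm

lemma condExp_posDef (hE : IsCondExp N E) {x : Mat n} (hx : x.PosDef) :
    (E x).PosDef := by
  classical
  have hH : (E x).IsHermitian := condExp_isHermitian hE hx.isHermitian
  refine posDef_of_eigenvalues_pos hH fun i0 => ?_
  set μ := hH.eigenvalues i0 with hμdef
  set ind : ℝ → ℂ := fun r => if r = μ then 1 else 0 with hind
  have hPmem : specFun hH ind ∈ N := specFun_mem hH (hE.1 x) ind
  have hstar : (fun r => star (ind r)) = ind := by
    funext r
    by_cases h : r = μ <;> simp [hind, h]
  have hWW : specFun hH ind * (specFun hH ind)ᴴ = specFun hH ind := by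
    rw [specFun_conjTranspose, hstar, specFun_mul]
    refine specFun_congr _ fun i => ?_
    by_cases h : hH.eigenvalues i = μ <;> simp [hind, h]
  have hW0 : specFun hH ind ≠ 0 := by
    intro h0
    have h1 : (specFun hH ind).trace = ∑ i, ind (hH.eigenvalues i) := specFun_trace hH ind
    rw [h0, Matrix.trace_zero] at h1
    have h2 : (0:ℝ) < ∑ i, (ind (hH.eigenvalues i)).re := by
      refine Finset.sum_pos' (fun i _ => ?_) ⟨i0, Finset.mem_univ i0, ?_⟩
      · by_cases h : hH.eigenvalues i = μ <;> simp [hind, h]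
      · simp [hind, hμdef]
    rw [← Complex.re_sum, ← h1] at h2
    simp at h2
  have hpos : 0 < (((E x) * specFun hH ind).trace).re := by
    rw [condExp_trace hE x hPmem]
    have e1 : ((specFun hH ind)ᴴ * x * specFun hH ind).trace =
        (x * specFun hH ind).trace := by
      rw [Matrix.trace_mul_cycle, hWW, Matrix.trace_mul_comm]
    rw [← e1]
    exact trace_conj_pos hx hW0
  have hval : (((E x) * specFun hH ind).trace).re =
      ∑ i, (if hH.eigenvalues i = μ then μ else 0) := by
    have e2 : ((E x) * specFun hH ind).trace.re =
        ((specFun hH (fun r => (r : ℂ)) * specFun hH ind)).trace.re := by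
      rw [specFun_id]
    rw [e2, specFun_mul, specFun_trace, Complex.re_sum]
    refine Finset.sum_congr rfl fun i _ => ?_
    by_cases h : hH.eigenvalues i = μ <;> simp [hind, h]
  by_contra hc
  push_neg at hc
  have hle : ∑ i, (if hH.eigenvalues i = μ then μ else 0) ≤ 0 := by
    refine Finset.sum_nonpos fun i => ?_
    by_cases h : hH.eigenvalues i = μ <;> simp [h, hc]
  rw [hval] at hpos
  linarith

end CondExpAux

section TraceNormAux

variable {n : ℕ}

lemma isHermitian_mul_sub (A B : Mat n) : (A * Aᴴ - B * Bᴴ).IsHermitian := by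
  show (A * Aᴴ - B * Bᴴ)ᴴ = _
  simp only [Matrix.conjTranspose_sub, Matrix.conjTranspose_mul,
    Matrix.conjTranspose_conjTranspose]

set_option maxHeartbeats 1000000 in
lemma traceNorm_mul_sub_le (A B : Mat n) :
    traceNorm (A * Aᴴ - B * Bᴴ) ≤ (hsNorm A + hsNorm B) * hsNorm (A - B) := by
  classical
  have hM : (A * Aᴴ - B * Bᴴ).IsHermitian := isHermitian_mul_sub A B
  set g : ℝ → ℂ := fun r => if r < 0 then -1 else 1 with hg
  set S := specFun hM g with hSdef
  have hS : Sᴴ * S = 1 := by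
    rw [hSdef, specFun_conjTranspose, specFun_mul]
    rw [show ((fun r => star (g r)) * g) = fun _ : ℝ => (1 : ℂ) by
      funext r; by_cases h : r < 0 <;> simp [hg, h]]
    exact specFun_one hM
  have habs : traceNorm (A * Aᴴ - B * Bᴴ) = ∑ i, |hM.eigenvalues i| := by
    have hsq : (specFun hM (fun r => ((|r| : ℝ) : ℂ))) ^ 2 = (A * Aᴴ - B * Bᴴ)ᴴ * (A * Aᴴ - B * Bᴴ) := by
      rw [hM.eq, pow_two, specFun_mul]
      have e1 : (A * Aᴴ - B * Bᴴ) * (A * Aᴴ - B * Bᴴ) =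
          specFun hM (fun r => (r : ℂ)) * specFun hM (fun r => (r : ℂ)) := by
        rw [specFun_id]
      rw [e1, specFun_mul]
      refine specFun_congr _ fun i => ?_
      simp only [Pi.mul_apply]
      rw [← Complex.ofReal_mul, ← Complex.ofReal_mul, abs_mul_abs_self]
    have hsqrt : (((Matrix.posSemidef_conjTranspose_mul_self (A * Aᴴ - B * Bᴴ)).1.eigenvectorUnitary : Mat n) *
        Matrix.diagonal (fun i =>
          ((Real.sqrt ((Matrix.posSemidef_conjTranspose_mul_self (A * Aᴴ - B * Bᴴ)).1.eigenvalues i) : ℝ) : ℂ)) *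
        (star (Matrix.posSemidef_conjTranspose_mul_self (A * Aᴴ - B * Bᴴ)).1.eigenvectorUnitary : Mat n)) =
        specFun hM (fun r => ((|r| : ℝ) : ℂ)) := by
      have e1 : (((Matrix.posSemidef_conjTranspose_mul_self (A * Aᴴ - B * Bᴴ)).1.eigenvectorUnitary : Mat n) *
          Matrix.diagonal (fun i =>
            ((Real.sqrt ((Matrix.posSemidef_conjTranspose_mul_self (A * Aᴴ - B * Bᴴ)).1.eigenvalues i) : ℝ) : ℂ)) *
          (star (Matrix.posSemidef_conjTranspose_mul_self (A * Aᴴ - B * Bᴴ)).1.eigenvectorUnitary : Mat n)) =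
          cfc Real.sqrt ((A * Aᴴ - B * Bᴴ)ᴴ * (A * Aᴴ - B * Bᴴ)) := by
        rw [(Matrix.posSemidef_conjTranspose_mul_self (A * Aᴴ - B * Bᴴ)).1.cfc_eq]
        rfl
      have e2 : cfc Real.sqrt ((A * Aᴴ - B * Bᴴ)ᴴ * (A * Aᴴ - B * Bᴴ)) =
          cfc (fun r : ℝ => |r|) (A * Aᴴ - B * Bᴴ) := by
        rw [hM.eq, ← pow_two, ← cfc_comp_pow Real.sqrt 2 (A * Aᴴ - B * Bᴴ)]
        exact cfc_congr fun x _ => Real.sqrt_sq_eq_abs x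
      rw [e1, e2, hM.cfc_eq]
      rfl
    rw [traceNorm, hsqrt, specFun_trace, Complex.re_sum]
    exact Finset.sum_congr rfl fun i _ => Complex.ofReal_re _
  have htrS : ((S * (A * Aᴴ - B * Bᴴ)).trace).re = ∑ i, |hM.eigenvalues i| := by
    have e2 : ((S * (A * Aᴴ - B * Bᴴ)).trace).re =
        ((specFun hM g * specFun hM (fun r => (r : ℂ))).trace).re := by
      rw [specFun_id]
    rw [e2, specFun_mul, specFun_trace, Complex.re_sum]
    refine Finset.sum_congr rfl fun i _ => ?_
    by_cases h : hM.eigenvalues i < 0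
    · simp [hg, h, abs_of_neg h]
    · simp [hg, h, abs_of_nonneg (not_lt.mp h)]
  have hdec : S * (A * Aᴴ - B * Bᴴ) = S * A * (A - B)ᴴ + S * (A - B) * Bᴴ := by
    simp only [Matrix.conjTranspose_sub, Matrix.mul_sub, Matrix.sub_mul, Matrix.mul_assoc]
    abel
  have hb1 : ((S * A * (A - B)ᴴ).trace).re ≤ hsNorm A * hsNorm (A - B) := by
    have e3 : (S * A * (A - B)ᴴ).trace = hsInner (A - B) (S * A) := by
      rw [Matrix.trace_mul_comm, hsInner]
    rw [e3]
    calc (hsInner (A - B) (S * A)).re ≤ hsNorm (A - B) * hsNorm (S * A) := hsInner_re_le _ _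
      _ = hsNorm (A - B) * hsNorm A := by rw [hsNorm_unitary_mul hS]
      _ = hsNorm A * hsNorm (A - B) := mul_comm _ _
  have hb2 : ((S * (A - B) * Bᴴ).trace).re ≤ hsNorm B * hsNorm (A - B) := by
    have e4 : (S * (A - B) * Bᴴ).trace = hsInner B (S * (A - B)) := by
      rw [Matrix.trace_mul_comm, hsInner]
    rw [e4]
    calc (hsInner B (S * (A - B))).re ≤ hsNorm B * hsNorm (S * (A - B)) := hsInner_re_le _ _
      _ = hsNorm B * hsNorm (A - B) := by rw [hsNorm_unitary_mul hS]
  calc traceNorm (A * Aᴴ - B * Bᴴ) = ((S * (A * Aᴴ - B * Bᴴ)).trace).re := habs.trans htrS.symm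
    _ = ((S * A * (A - B)ᴴ).trace).re + ((S * (A - B) * Bᴴ).trace).re := by
        rw [hdec, Matrix.trace_add, Complex.add_re]
    _ ≤ hsNorm A * hsNorm (A - B) + hsNorm B * hsNorm (A - B) := add_le_add hb1 hb2
    _ = (hsNorm A + hsNorm B) * hsNorm (A - B) := by ring

lemma mpow_mul_self {A : Mat n} (hA : A.PosDef) (z : ℂ) :
    A * mpow A z = mpow A (1 + z) := by
  calc A * mpow A z = mpow A 1 * mpow A z := by rw [mpow_one hA.isHermitian]
    _ = mpow A (1 + z) := mpow_add hA 1 z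

end TraceNormAux

set_option maxHeartbeats 1000000 in
/-- part of Lemma 3.10.
For faithful states `ρ, σ` of `Mₙ(ℂ)` and `t ∈ ℝ`:
`‖ρ − R_σ^{−t}(ρ_N)‖₁ ≤ 2 ‖ρ^{1/2} − σ^{1/2+it} σ_N^{−1/2−it} ρ_N^{1/2+it} ρ^{−it}‖₂`. -/
theorem stmt8 (n : ℕ) (N : StarSubalgebra ℂ (Mat n)) (E : Mat n →ₗ[ℂ] Mat n)
    (hE : IsCondExp N E)
    (ρ σ : Mat n) (hρ : ρ.PosDef) (hρ1 : ρ.trace = 1) (hσ : σ.PosDef) (hσ1 : σ.trace = 1)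
    (t : ℝ) :
    traceNorm (ρ - rotPetz σ (E σ) (-t) (E ρ)) ≤
      2 * hsNorm (mpow ρ (1/2) -
        mpow σ (1/2 + Complex.I * t) * mpow (E σ) (-(1/2) - Complex.I * t) *
          mpow (E ρ) (1/2 + Complex.I * t) * mpow ρ (-(Complex.I * t))) := by
  have hρN : (E ρ).PosDef := condExp_posDef hE hρ
  have hσN : (E σ).PosDef := condExp_posDef hE hσ
  set A := mpow ρ (1/2) with hA
  set B := mpow σ (1/2 + Complex.I * t) * mpow (E σ) (-(1/2) - Complex.I * t) *
      mpow (E ρ) (1/2 + Complex.I * t) * mpow ρ (-(Complex.I * t)) with hB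
  have s1 : star ((1:ℂ)/2 + Complex.I * t) = 1/2 - Complex.I * t := by
    simp [Complex.ext_iff]
  have s2' : star (-((1:ℂ)/2) - Complex.I * t) = -(1/2) + Complex.I * t := by
    simp [Complex.ext_iff]
  have s3 : star (-(Complex.I * (t:ℂ))) = Complex.I * t := by
    simp [Complex.ext_iff]
  have shalf : star ((1:ℂ)/2) = 1/2 := by simp
  have hBH : Bᴴ = mpow ρ (Complex.I * t) * (mpow (E ρ) (1/2 - Complex.I * t) *
      (mpow (E σ) (-(1/2) + Complex.I * t) * mpow σ (1/2 - Complex.I * t))) := by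
    rw [hB]
    simp only [Matrix.conjTranspose_mul]
    rw [mpow_conjTranspose hρ, mpow_conjTranspose hρN, mpow_conjTranspose hσN,
      mpow_conjTranspose hσ, s1, s2', s3]
  have hcol1 : ∀ X : Mat n, mpow ρ (-(Complex.I * t)) * (mpow ρ (Complex.I * t) * X) = X := by
    intro X
    rw [← Matrix.mul_assoc, mpow_add hρ,
      show -(Complex.I * (t:ℂ)) + Complex.I * t = 0 from by ring,
      mpow_zero hρ.isHermitian, Matrix.one_mul]
  have hcol2 : ∀ X : Mat n, mpow (E ρ) (1/2 + Complex.I * t) *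
      (mpow (E ρ) (1/2 - Complex.I * t) * X) = (E ρ) * X := by
    intro X
    rw [← Matrix.mul_assoc, mpow_add hρN,
      show ((1:ℂ)/2 + Complex.I * t) + (1/2 - Complex.I * t) = 1 from by ring,
      mpow_one hρN.isHermitian]
  have hR : rotPetz σ (E σ) (-t) (E ρ) = B * Bᴴ := by
    rw [hBH, hB, rotPetz,
      show ((1:ℂ)/2 - Complex.I * ((-t : ℝ) : ℂ)) = 1/2 + Complex.I * t from by
        push_cast; ring,
      show (-((1:ℂ)/2) + Complex.I * ((-t : ℝ) : ℂ)) = -(1/2) - Complex.I * t from by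
        push_cast; ring,
      show (-((1:ℂ)/2) - Complex.I * ((-t : ℝ) : ℂ)) = -(1/2) + Complex.I * t from by
        push_cast; ring,
      show ((1:ℂ)/2 + Complex.I * ((-t : ℝ) : ℂ)) = 1/2 - Complex.I * t from by
        push_cast; ring]
    simp only [Matrix.mul_assoc]
    rw [hcol1, hcol2]
  have hAA : A * Aᴴ = ρ := by
    rw [hA, mpow_conjTranspose hρ, shalf, mpow_add hρ,
      show ((1:ℂ)/2 + 1/2) = 1 from by norm_num, mpow_one hρ.isHermitian]
  have hMeq : ρ - rotPetz σ (E σ) (-t) (E ρ) = A * Aᴴ - B * Bᴴ := by rw [hR, hAA]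
  have hnA : hsNorm A = 1 := by
    have e : Aᴴ * A = ρ := by
      rw [hA, mpow_conjTranspose hρ, shalf, mpow_add hρ,
        show ((1:ℂ)/2 + 1/2) = 1 from by norm_num, mpow_one hρ.isHermitian]
    rw [hsNorm, e, hρ1, Complex.one_re, Real.sqrt_one]
  have htrR : (rotPetz σ (E σ) (-t) (E ρ)).trace = 1 := by
    rw [rotPetz,
      show ((1:ℂ)/2 - Complex.I * ((-t : ℝ) : ℂ)) = 1/2 + Complex.I * t from by
        push_cast; ring,
      show (-((1:ℂ)/2) + Complex.I * ((-t : ℝ) : ℂ)) = -(1/2) - Complex.I * t from by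
        push_cast; ring,
      show (-((1:ℂ)/2) - Complex.I * ((-t : ℝ) : ℂ)) = -(1/2) + Complex.I * t from by
        push_cast; ring,
      show ((1:ℂ)/2 + Complex.I * ((-t : ℝ) : ℂ)) = 1/2 - Complex.I * t from by
        push_cast; ring]
    rw [Matrix.trace_mul_comm]
    simp only [← Matrix.mul_assoc]
    rw [mpow_add hσ,
      show ((1:ℂ)/2 - Complex.I * t) + (1/2 + Complex.I * t) = 1 from by ring,
      mpow_one hσ.isHermitian]
    simp only [Matrix.mul_assoc]
    have hZ : mpow (E σ) (-(1/2) - Complex.I * t) *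
        ((E ρ) * mpow (E σ) (-(1/2) + Complex.I * t)) ∈ N :=
      mul_mem (mpow_mem hσN.isHermitian (hE.1 σ) _)
        (mul_mem (hE.1 ρ) (mpow_mem hσN.isHermitian (hE.1 σ) _))
    rw [← condExp_trace hE σ hZ, ← Matrix.mul_assoc, mpow_mul_self hσN,
      show (1:ℂ) + (-(1/2) - Complex.I * t) = 1/2 - Complex.I * t from by ring,
      Matrix.trace_mul_comm, Matrix.mul_assoc, mpow_add hσN,
      show (-((1:ℂ)/2) + Complex.I * t) + (1/2 - Complex.I * t) = 0 from by ring,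
      mpow_zero hσN.isHermitian, Matrix.mul_one]
    have e1 := condExp_trace hE ρ (one_mem N)
    rw [Matrix.mul_one, Matrix.mul_one] at e1
    rw [e1, hρ1]
  have hnB : hsNorm B = 1 := by
    have e : (Bᴴ * B).trace = 1 := by rw [Matrix.trace_mul_comm, ← hR, htrR]
    rw [hsNorm, e, Complex.one_re, Real.sqrt_one]
  calc traceNorm (ρ - rotPetz σ (E σ) (-t) (E ρ)) = traceNorm (A * Aᴴ - B * Bᴴ) := by
        rw [hMeq]
    _ ≤ (hsNorm A + hsNorm B) * hsNorm (A - B) := traceNorm_mul_sub_le A B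
    _ = 2 * hsNorm (A - B) := by rw [hnA, hnB]; ring


end QFDiv
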